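/- Let X be a finite symmetric generating set of ℤ², viewed as vectors in ℝ², and let P be the convex hull of X. If x_i, x_j ∈ X are such that the segment joining x_i to x_j lies entirely on the boundary of P, then the element n·x_i + n·x_j is at word-distance exactly 2n from 0 in the word metric on ℤ² determined by X. -/

import Mathlib

/-- The embedding of the integer lattice ℤ² into ℝ². -/
def latticeEmb : ℤ × ℤ → ℝ × ℝ := fun p => ((p.1 : ℝ), (p.2 : ℝ))

lemma latticeEmb_add (a b : ℤ × ℤ) : latticeEmb (a + b) = latticeEmb a + latticeEmb b := by
  simp [latticeEmb, Prod.ext_iff]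

lemma latticeEmb_zero : latticeEmb 0 = 0 := by simp [latticeEmb, Prod.ext_iff]

lemma latticeEmb_neg (a : ℤ × ℤ) : latticeEmb (-a) = -latticeEmb a := by
  simp [latticeEmb, Prod.ext_iff]

lemma latticeEmb_nsmul (n : ℕ) (a : ℤ × ℤ) : latticeEmb (n • a) = (n : ℝ) • latticeEmb a := by
  simp [latticeEmb, Prod.ext_iff]

/-- `latticeEmb` as an additive monoid hom. -/
def latticeEmbHom : (ℤ × ℤ) →+ ℝ × ℝ where
  toFun := latticeEmb
  map_zero' := latticeEmb_zero
  map_add' := latticeEmb_add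

theorem boundary_edge_gives_word_distance (X : Finset (ℤ × ℤ))
    (hsym : ∀ v ∈ X, -v ∈ X) (hgen : AddSubgroup.closure (X : Set (ℤ × ℤ)) = ⊤)
    (xi xj : ℤ × ℤ) (hxi : xi ∈ X) (hxj : xj ∈ X)
    (hseg : segment ℝ (latticeEmb xi) (latticeEmb xj) ⊆
      frontier (convexHull ℝ (latticeEmb '' (X : Set (ℤ × ℤ)))))
    (n : ℕ) :
    IsLeast {l : ℕ | ∃ w : List (ℤ × ℤ), (∀ v ∈ w, v ∈ X) ∧
      w.sum = n • xi + n • xj ∧ w.length = l} (2 * n) := by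
  set S : Set (ℝ × ℝ) := latticeEmb '' (X : Set (ℤ × ℤ)) with hS
  set P : Set (ℝ × ℝ) := convexHull ℝ S with hP
  have hPconv : Convex ℝ P := convex_convexHull ℝ S
  -- span of the image is everything
  have key : ∀ p : ℤ × ℤ, latticeEmb p ∈ Submodule.span ℝ S := by
    intro p
    have hp : p ∈ AddSubgroup.closure (X : Set (ℤ × ℤ)) := by rw [hgen]; trivial
    induction hp using AddSubgroup.closure_induction with
    | mem x hx => exact Submodule.subset_span ⟨x, hx, rfl⟩
    | zero => rw [latticeEmb_zero]; exact Submodule.zero_mem _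
    | add a b _ _ ha hb => rw [latticeEmb_add]; exact Submodule.add_mem _ ha hb
    | neg a _ ha => rw [latticeEmb_neg]; exact Submodule.neg_mem _ ha
  have hspan : Submodule.span ℝ S = ⊤ := by
    have h1 : ((1 : ℝ), (0 : ℝ)) ∈ Submodule.span ℝ S := by
      have := key (1, 0); simpa [latticeEmb] using this
    have h2 : ((0 : ℝ), (1 : ℝ)) ∈ Submodule.span ℝ S := by
      have := key (0, 1); simpa [latticeEmb] using this
    rw [eq_top_iff]
    intro v _
    have hv : v = v.1 • ((1 : ℝ), (0 : ℝ)) + v.2 • ((0 : ℝ), (1 : ℝ)) := by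
      simp [Prod.ext_iff]
    rw [hv]
    exact Submodule.add_mem _ (Submodule.smul_mem _ _ h1) (Submodule.smul_mem _ _ h2)
  have hXne : S.Nonempty := by
    rcases Set.eq_empty_or_nonempty S with h | h
    · exfalso
      rw [h, Submodule.span_empty] at hspan
      exact absurd (hspan ▸ Submodule.mem_top : ((1:ℝ),(0:ℝ)) ∈ (⊥ : Submodule ℝ (ℝ × ℝ)))
        (by simp [Prod.ext_iff])
    · exact h
  -- affine span is top
  have haff : affineSpan ℝ S = ⊤ := by
    rw [AffineSubspace.affineSpan_eq_top_iff_vectorSpan_eq_top_of_nonempty ℝ (ℝ × ℝ) (ℝ × ℝ) hXne]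
    rw [eq_top_iff, ← hspan, Submodule.span_le]
    rintro v ⟨x, hx, rfl⟩
    have h2 : latticeEmb x - latticeEmb (-x) ∈ vectorSpan ℝ S :=
      vsub_mem_vectorSpan ℝ ⟨x, hx, rfl⟩ ⟨-x, hsym x hx, rfl⟩
    rw [latticeEmb_neg, sub_neg_eq_add] at h2
    have hhalf : latticeEmb x = (1/2 : ℝ) • (latticeEmb x + latticeEmb x) := by
      rw [smul_add]; module
    rw [hhalf]
    exact Submodule.smul_mem _ _ h2
  -- interior of P is nonempty
  have hint : (interior P).Nonempty := by
    rw [hP, interior_convexHull_nonempty_iff_affineSpan_eq_top]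
    exact haff
  -- P is symmetric
  have hSneg : -S = S := by
    ext v
    simp only [Set.mem_neg]
    constructor
    · rintro ⟨x, hx, hxe⟩
      exact ⟨-x, hsym x hx, by rw [latticeEmb_neg, hxe, neg_neg]⟩
    · rintro ⟨x, hx, rfl⟩
      exact ⟨-x, hsym x hx, by rw [latticeEmb_neg]⟩
  have hPneg : -P = P := by rw [hP, ← convexHull_neg, hSneg]
  have hPsym : ∀ y ∈ P, -y ∈ P := by
    intro y hy
    rw [← hPneg]
    exact Set.neg_mem_neg.mpr hy
  -- 0 is in the interior
  have h0 : (0 : ℝ × ℝ) ∈ interior P := by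
    obtain ⟨y, hy⟩ := hint
    have h1 : -y ∈ closure P := subset_closure (hPsym y (interior_subset hy))
    have := hPconv.combo_interior_closure_mem_interior hy h1 (by norm_num : (0:ℝ) < 1/2)
      (by norm_num : (0:ℝ) ≤ 1/2) (by norm_num)
    simpa using this
  -- midpoint lies on the frontier
  set m : ℝ × ℝ := (1/2 : ℝ) • (latticeEmb xi + latticeEmb xj) with hm
  have hmfr : m ∈ frontier P := by
    apply hseg
    exact ⟨1/2, 1/2, by norm_num, by norm_num, by norm_num, by rw [hm, smul_add]⟩
  have hmni : m ∉ interior P := hmfr.2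
  constructor
  · -- membership: word of length 2n
    refine ⟨List.replicate n xi ++ List.replicate n xj, ?_, ?_, ?_⟩
    · intro v hv
      rcases List.mem_append.mp hv with h | h
      · rw [List.eq_of_mem_replicate h]; exact hxi
      · rw [List.eq_of_mem_replicate h]; exact hxj
    · simp [List.sum_replicate]
    · simp [two_mul]
  · -- lower bound
    rintro l ⟨w, hw, hsum, rfl⟩
    by_contra hlt
    push_neg at hlt
    have hn : 1 ≤ n := by omega
    have hwP : ∀ i : Fin w.length, latticeEmb (w.get i) ∈ P :=
      fun i => subset_convexHull ℝ S ⟨w.get i, hw _ (w.get_mem i), rfl⟩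
    have hemb : latticeEmb w.sum = (2 * n : ℝ) • m := by
      rw [hsum, latticeEmb_add, latticeEmb_nsmul, latticeEmb_nsmul, hm, smul_smul, smul_add]
      push_cast
      module
    rcases Nat.eq_zero_or_pos w.length with h0l | h0l
    · have hwnil : w = [] := List.length_eq_zero_iff.mp h0l
      have hm0 : (2 * n : ℝ) • m = 0 := by
        rw [← hemb, hwnil, List.sum_nil, latticeEmb_zero]
      have h2n : (2 * n : ℝ) ≠ 0 := by positivity
      have hmz : m = 0 := (smul_eq_zero.mp hm0).resolve_left h2n
      exact hmni (hmz ▸ h0)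
    · set L : ℝ := (w.length : ℝ) with hL
      have hLpos : 0 < L := Nat.cast_pos.mpr h0l
      have hLne : L ≠ 0 := ne_of_gt hLpos
      have h2n : (2 * n : ℝ) ≠ 0 := by positivity
      have havg : (1 / L) • latticeEmb w.sum ∈ P := by
        have hsum' : latticeEmb w.sum = ∑ i : Fin w.length, latticeEmb (w.get i) := by
          show latticeEmbHom w.sum = _
          rw [map_list_sum]
          conv_lhs => rw [← List.ofFn_get w]
          rw [List.map_ofFn, List.sum_ofFn]
          rfl
        rw [hsum', Finset.smul_sum]
        exact hPconv.sum_mem (fun i _ => by positivity)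
          (by rw [Finset.sum_const, Finset.card_univ, Fintype.card_fin, nsmul_eq_mul, ← hL]; field_simp)
          (fun i _ => hwP i)
      set q : ℝ × ℝ := (1 / L) • latticeEmb w.sum with hq
      have hmq : m = (1 - L / (2 * n)) • (0 : ℝ × ℝ) + (L / (2 * n)) • q := by
        rw [hq, hemb, smul_zero, zero_add, smul_smul, smul_smul]
        have hc : L / (2 * ↑n) * (1 / L) * (2 * ↑n) = 1 := by field_simp
        rw [hc, one_smul]
      have hlt' : L < 2 * (n : ℝ) := by
        rw [hL]
        exact_mod_cast hlt
      have ha : (0 : ℝ) < 1 - L / (2 * n) := by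
        have h2np : (0:ℝ) < 2 * n := by positivity
        rw [sub_pos, div_lt_one h2np]
        exact hlt'
      have hb : (0 : ℝ) ≤ L / (2 * n) := by positivity
      have hab : (1 - L / (2 * n)) + L / (2 * n) = 1 := by ring
      have hmem : m ∈ interior P := by
        rw [hmq]
        exact hPconv.combo_interior_closure_mem_interior h0 (subset_closure havg) ha hb hab
      exact hmni hmem
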